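/- For every integer k ≥ 2, every integer n with 1 ≤ n ≤ 6k−2 and n ≠ 6k−3 is attainable from T = {(3,0),(0,3k)}. -/

import Mathlib

open Pointwise MeasureTheory

/-- The Newton polyhedron `Γ₊(T)`: the Minkowski sum of the convex hull of the
(real images of the) lattice points of `T` with the nonnegative quadrant. -/
noncomputable def GammaPlus (T : Finset (ℕ × ℕ)) : Set (ℝ × ℝ) :=
  convexHull ℝ ((fun v : ℕ × ℕ => ((v.1 : ℝ), (v.2 : ℝ))) '' (T : Set (ℕ × ℕ))) +
    {v : ℝ × ℝ | 0 ≤ v.1 ∧ 0 ≤ v.2}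

/-- `a(T)`: the smallest `x` with `(x,0) ∈ Γ₊(T)`. -/
noncomputable def axisA (T : Finset (ℕ × ℕ)) : ℝ :=
  sInf {x : ℝ | (x, (0 : ℝ)) ∈ GammaPlus T}

/-- `b(T)`: the smallest `y` with `(0,y) ∈ Γ₊(T)`. -/
noncomputable def axisB (T : Finset (ℕ × ℕ)) : ℝ :=
  sInf {y : ℝ | ((0 : ℝ), y) ∈ GammaPlus T}

/-- `S(T)`: the Lebesgue area of the part of the nonnegative quadrant not in `Γ₊(T)`. -/
noncomputable def areaS (T : Finset (ℕ × ℕ)) : ℝ :=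
  (volume ({v : ℝ × ℝ | 0 ≤ v.1 ∧ 0 ≤ v.2} \ GammaPlus T)).toReal

/-- The Newton number `ν(T) = 2 S(T) - a(T) - b(T) + 1`. -/
noncomputable def newtonNumber (T : Finset (ℕ × ℕ)) : ℝ :=
  2 * areaS T - axisA T - axisB T + 1

/-- An integer `n` is attainable from `T` if `n = ν(T ∪ P)` for some finite `P ⊆ ℕ²`. -/
def Attainable (T : Finset (ℕ × ℕ)) (n : ℤ) : Prop :=
  ∃ P : Finset (ℕ × ℕ), (n : ℝ) = newtonNumber (T ∪ P)

open Set

set_option maxHeartbeats 1600000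

lemma null_vline : volume {v : ℝ × ℝ | v.1 = 0} = 0 := by
  have : {v : ℝ × ℝ | v.1 = 0} = ({0} : Set ℝ) ×ˢ (univ : Set ℝ) := by
    ext v; constructor
    · intro h; exact ⟨h, trivial⟩
    · rintro ⟨h, -⟩; exact h
  rw [this, Measure.volume_eq_prod, Measure.prod_prod]
  simp

lemma null_hline : volume {v : ℝ × ℝ | v.2 = 0} = 0 := by
  have : {v : ℝ × ℝ | v.2 = 0} = (univ : Set ℝ) ×ˢ ({0} : Set ℝ) := by
    ext v; constructor
    · intro h; exact ⟨trivial, h⟩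
    · rintro ⟨-, h⟩; exact h
  rw [this, Measure.volume_eq_prod, Measure.prod_prod]
  simp

lemma vol_under (g : ℝ → ℝ) (c : ℝ) (hc : 0 < c) (hg : Continuous g)
    (hpos : ∀ x ∈ Ioo (0:ℝ) c, 0 ≤ g x) (hneg : ∀ x, c ≤ x → g x ≤ 0) :
    volume {v : ℝ × ℝ | 0 ≤ v.1 ∧ 0 ≤ v.2 ∧ v.2 < g v.1}
      = ENNReal.ofReal (∫ x in Ioo (0:ℝ) c, g x) := by
  set D := {v : ℝ × ℝ | 0 ≤ v.1 ∧ 0 ≤ v.2 ∧ v.2 < g v.1}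
  set R := regionBetween (fun _ => (0:ℝ)) g (Ioo 0 c)
  have hRD : R ⊆ D := by
    rintro ⟨x, y⟩ ⟨hx, hy⟩
    exact ⟨le_of_lt hx.1, le_of_lt hy.1, hy.2⟩
  have hDR : D \ R ⊆ {v : ℝ × ℝ | v.1 = 0} ∪ {v : ℝ × ℝ | v.2 = 0} := by
    rintro ⟨x, y⟩ ⟨⟨hx, hy, hlt⟩, hnot⟩
    rcases eq_or_lt_of_le hx with h | h
    · exact Or.inl h.symm
    rcases eq_or_lt_of_le hy with h2 | h2
    · exact Or.inr h2.symm
    exfalso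
    rcases lt_or_ge x c with h3 | h3
    · exact hnot ⟨⟨h, h3⟩, h2, hlt⟩
    · exact absurd hlt (not_lt.2 (le_trans (hneg x h3) hy))
  have hvol : volume D = volume R := by
    apply le_antisymm
    · calc volume D ≤ volume (R ∪ (D \ R)) := by
            apply measure_mono; intro v hv
            by_cases h : v ∈ R
            · exact Or.inl h
            · exact Or.inr ⟨hv, h⟩
          _ ≤ volume R + volume (D \ R) := measure_union_le _ _
          _ ≤ volume R + 0 := by
            gcongr
            calc volume (D \ R) ≤ volume ({v : ℝ × ℝ | v.1 = 0} ∪ {v : ℝ × ℝ | v.2 = 0}) :=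
                  measure_mono hDR
              _ ≤ volume {v : ℝ × ℝ | v.1 = 0} + volume {v : ℝ × ℝ | v.2 = 0} :=
                  measure_union_le _ _
              _ = 0 := by rw [null_vline, null_hline, add_zero]
          _ = volume R := add_zero _
    · exact measure_mono hRD
  rw [hvol]
  have hint : IntegrableOn g (Ioo 0 c) := by
    apply (hg.integrableOn_Icc (a := 0) (b := c)).mono_set Ioo_subset_Icc_self
  have := volume_regionBetween_eq_integral (f := fun _ => (0:ℝ)) (g := g)
    (s := Ioo (0:ℝ) c) (μ := volume) (integrableOn_const measure_Ioo_lt_top.ne)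
    hint measurableSet_Ioo ?_
  · rw [Measure.volume_eq_prod, this]
    congr 1
    apply setIntegral_congr_fun measurableSet_Ioo
    intro x hx; simp
  · exact hpos

lemma gamma_two (a b : ℕ) (ha : 1 ≤ a) (hb : 1 ≤ b) :
    GammaPlus {(a,0),(0,b)} = {v : ℝ × ℝ | 0 ≤ v.1 ∧ 0 ≤ v.2 ∧
      (a:ℝ)*(b:ℝ) ≤ (b:ℝ) * v.1 + (a:ℝ) * v.2} := by
  have ha0 : (0:ℝ) < a := by exact_mod_cast ha
  have hb0 : (0:ℝ) < b := by exact_mod_cast hb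
  have himg : ((fun v : ℕ × ℕ => ((v.1 : ℝ), (v.2 : ℝ))) ''
      (({(a,0),(0,b)} : Finset (ℕ×ℕ)) : Set (ℕ × ℕ)))
      = {((a:ℝ),(0:ℝ)), ((0:ℝ),(b:ℝ))} := by
    simp [Finset.coe_insert, Set.image_insert_eq]
  unfold GammaPlus
  rw [himg, convexHull_pair]
  ext ⟨x, y⟩
  simp only [Set.mem_setOf_eq]
  constructor
  · rintro ⟨p, hp, q, hq, hpq⟩
    obtain ⟨s, t, hs, ht, hst, rfl⟩ := hp
    obtain ⟨hq1, hq2⟩ := hq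
    have hx : x = s * a + q.1 := by
      have := congrArg Prod.fst hpq; simpa using this.symm
    have hy : y = t * b + q.2 := by
      have := congrArg Prod.snd hpq; simpa using this.symm
    refine ⟨?_, ?_, ?_⟩
    · show (0:ℝ) ≤ x
      nlinarith [mul_nonneg hs ha0.le]
    · show (0:ℝ) ≤ y
      nlinarith [mul_nonneg ht hb0.le]
    · show (a:ℝ)*(b:ℝ) ≤ (b:ℝ) * x + (a:ℝ) * y
      have hsum : s*((a:ℝ)*b) + t*((a:ℝ)*b) = (a:ℝ)*b := by rw [← add_mul, hst, one_mul]
      nlinarith [mul_nonneg hb0.le hq1, mul_nonneg ha0.le hq2, hsum]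
  · rintro ⟨hx, hy, hineq⟩
    rcases le_or_gt (a:ℝ) x with h | h
    · refine ⟨((a:ℝ),(0:ℝ)), left_mem_segment _ _ _, (x - a, y), ⟨?_, ?_⟩, ?_⟩
      · show (0:ℝ) ≤ x - a; linarith
      · exact hy
      · show ((a:ℝ),(0:ℝ)) + (x - (a:ℝ), y) = (x, y)
        rw [Prod.mk_add_mk]; norm_num
    · have hkey : (1 - x/a) * b ≤ y := by
        have h1 : ((b:ℝ) - y) * a ≤ x * b := by nlinarith
        have h2 : (b:ℝ) - y ≤ x * b / a := (le_div_iff₀ ha0).mpr h1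
        have h3 : (1 - x/(a:ℝ)) * b = b - x * b / a := by field_simp
        linarith
      refine ⟨(x, (1 - x/a) * b), ?_, (0, y - (1 - x/a) * b), ⟨le_refl 0, ?_⟩, ?_⟩
      · refine ⟨x/a, 1 - x/a, by positivity, ?_, by ring, ?_⟩
        · have : x/a ≤ 1 := by rw [div_le_one ha0]; linarith
          linarith
        · have hxa : x / a * a = x := by field_simp
          simp only [Prod.smul_mk, smul_eq_mul, Prod.mk_add_mk]
          rw [hxa]; norm_num
      · show (0:ℝ) ≤ y - (1 - x/a) * b; linarith
      · show (x, (1 - x/(a:ℝ)) * b) + ((0:ℝ), y - (1 - x/a) * b) = (x, y)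
        rw [Prod.mk_add_mk]; norm_num

lemma gamma_three (b d : ℕ) (hd : 1 ≤ d) (h : 3*d < b) :
    GammaPlus {(3,0),(2,d),(0,b)} = {v : ℝ × ℝ | 0 ≤ v.1 ∧ 0 ≤ v.2 ∧
      3*(d:ℝ) ≤ (d:ℝ)*v.1 + v.2 ∧ 2*(b:ℝ) ≤ ((b:ℝ)-(d:ℝ))*v.1 + 2*v.2} := by
  have hd0 : (0:ℝ) < d := by exact_mod_cast hd
  have hb3d : 3*(d:ℝ) < b := by exact_mod_cast h
  have himg : ((fun v : ℕ × ℕ => ((v.1 : ℝ), (v.2 : ℝ))) ''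
      (({(3,0),(2,d),(0,b)} : Finset (ℕ×ℕ)) : Set (ℕ × ℕ)))
      = {((3:ℝ),(0:ℝ)), ((2:ℝ),(d:ℝ)), ((0:ℝ),(b:ℝ))} := by
    simp [Finset.coe_insert, Set.image_insert_eq]
  set K : Set (ℝ × ℝ) := {v : ℝ × ℝ | 0 ≤ v.1 ∧ 0 ≤ v.2 ∧
      3*(d:ℝ) ≤ (d:ℝ)*v.1 + v.2 ∧ 2*(b:ℝ) ≤ ((b:ℝ)-(d:ℝ))*v.1 + 2*v.2} with hK
  have hKconv : Convex ℝ K := by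
    intro p hp q hq s t hs ht hst
    obtain ⟨hp1, hp2, hp3, hp4⟩ := hp
    obtain ⟨hq1, hq2, hq3, hq4⟩ := hq
    have e1 : (s • p + t • q).1 = s * p.1 + t * q.1 := rfl
    have e2 : (s • p + t • q).2 = s * p.2 + t * q.2 := rfl
    refine ⟨?_, ?_, ?_, ?_⟩ <;> simp only [Set.mem_setOf_eq, e1, e2] <;>
      nlinarith [mul_le_mul_of_nonneg_left hp3 hs, mul_le_mul_of_nonneg_left hq3 ht,
        mul_le_mul_of_nonneg_left hp4 hs, mul_le_mul_of_nonneg_left hq4 ht,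
        mul_nonneg hs hp1, mul_nonneg ht hq1, mul_nonneg hs hp2, mul_nonneg ht hq2]
  have hverts : ({((3:ℝ),(0:ℝ)), ((2:ℝ),(d:ℝ)), ((0:ℝ),(b:ℝ))} : Set (ℝ×ℝ)) ⊆ K := by
    rintro v (rfl | rfl | rfl)
    · refine ⟨by norm_num, le_refl 0, ?_, ?_⟩
      · show 3*(d:ℝ) ≤ (d:ℝ)*(3:ℝ) + (0:ℝ); linarith
      · show 2*(b:ℝ) ≤ ((b:ℝ)-(d:ℝ))*(3:ℝ) + 2*(0:ℝ); linarith
    · refine ⟨by norm_num, hd0.le, ?_, ?_⟩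
      · show 3*(d:ℝ) ≤ (d:ℝ)*(2:ℝ) + (d:ℝ); linarith
      · show 2*(b:ℝ) ≤ ((b:ℝ)-(d:ℝ))*(2:ℝ) + 2*(d:ℝ); linarith
    · refine ⟨le_refl 0, by positivity, ?_, ?_⟩
      · show 3*(d:ℝ) ≤ (d:ℝ)*(0:ℝ) + (b:ℝ); linarith
      · show 2*(b:ℝ) ≤ ((b:ℝ)-(d:ℝ))*(0:ℝ) + 2*(b:ℝ); linarith
  unfold GammaPlus
  rw [himg]
  ext ⟨x, y⟩
  constructor
  · rintro ⟨p, hp, q, ⟨hq1, hq2⟩, hpq⟩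
    have hpK : p ∈ K := convexHull_min hverts hKconv hp
    obtain ⟨hp1, hp2, hp3, hp4⟩ := hpK
    have hx : x = p.1 + q.1 := by
      have := congrArg Prod.fst hpq; simpa using this.symm
    have hy : y = p.2 + q.2 := by
      have := congrArg Prod.snd hpq; simpa using this.symm
    refine ⟨by linarith, by linarith, by nlinarith [mul_nonneg hd0.le hq1], by nlinarith⟩
  · rintro ⟨hx, hy, h1, h2⟩
    have hsub : ∀ u v : ℝ × ℝ, u ∈ ({((3:ℝ),(0:ℝ)), ((2:ℝ),(d:ℝ)), ((0:ℝ),(b:ℝ))} : Set (ℝ×ℝ)) →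
        v ∈ ({((3:ℝ),(0:ℝ)), ((2:ℝ),(d:ℝ)), ((0:ℝ),(b:ℝ))} : Set (ℝ×ℝ)) →
        segment ℝ u v ⊆ convexHull ℝ ({((3:ℝ),(0:ℝ)), ((2:ℝ),(d:ℝ)), ((0:ℝ),(b:ℝ))} : Set (ℝ×ℝ)) :=
      fun u v hu hv => segment_subset_convexHull hu hv
    rcases le_or_gt 3 x with hx3 | hx3
    · refine ⟨((3:ℝ),(0:ℝ)), subset_convexHull _ _ (by simp), (x - 3, y), ⟨by dsimp only; linarith, hy⟩, ?_⟩
      show ((3:ℝ),(0:ℝ)) + (x - 3, y) = (x, y)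
      rw [Prod.mk_add_mk]; norm_num
    · rcases le_or_gt 2 x with hx2 | hx2
      · refine ⟨(x, (3-x)*(d:ℝ)), ?_, (0, y - (3-x)*(d:ℝ)), ⟨le_refl 0, by dsimp only; nlinarith⟩, ?_⟩
        · apply hsub ((3:ℝ),(0:ℝ)) ((2:ℝ),(d:ℝ)) (by simp) (by simp)
          refine ⟨x - 2, 3 - x, by linarith, by linarith, by ring, ?_⟩
          show (x-2) • ((3:ℝ),(0:ℝ)) + (3-x) • ((2:ℝ),(d:ℝ)) = (x, (3-x)*(d:ℝ))
          simp only [Prod.smul_mk, smul_eq_mul, Prod.mk_add_mk, Prod.mk.injEq]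
          constructor <;> ring
        · show (x, (3-x)*(d:ℝ)) + ((0:ℝ), y - (3-x)*(d:ℝ)) = (x, y)
          rw [Prod.mk_add_mk]; norm_num
      · refine ⟨(x, (b:ℝ) - ((b:ℝ)-(d:ℝ))*x/2), ?_,
          (0, y - ((b:ℝ) - ((b:ℝ)-(d:ℝ))*x/2)), ⟨le_refl 0, by dsimp only; nlinarith⟩, ?_⟩
        · apply hsub ((2:ℝ),(d:ℝ)) ((0:ℝ),(b:ℝ)) (by simp) (by simp)
          refine ⟨x/2, 1 - x/2, by linarith, by linarith, by ring, ?_⟩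
          show (x/2) • ((2:ℝ),(d:ℝ)) + (1 - x/2) • ((0:ℝ),(b:ℝ)) = (x, (b:ℝ) - ((b:ℝ)-(d:ℝ))*x/2)
          simp only [Prod.smul_mk, smul_eq_mul, Prod.mk_add_mk, Prod.mk.injEq]
          constructor <;> ring
        · show (x, (b:ℝ) - ((b:ℝ)-(d:ℝ))*x/2) + ((0:ℝ), y - ((b:ℝ) - ((b:ℝ)-(d:ℝ))*x/2)) = (x, y)
          rw [Prod.mk_add_mk]; norm_num

lemma newton_two (a b : ℕ) (ha : 1 ≤ a) (hb : 1 ≤ b) :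
    newtonNumber {(a,0),(0,b)} = ((a:ℝ) - 1) * ((b:ℝ) - 1) := by
  have ha0 : (0:ℝ) < a := by exact_mod_cast ha
  have hb0 : (0:ℝ) < b := by exact_mod_cast hb
  have hA : axisA {(a,0),(0,b)} = a := by
    unfold axisA
    have : {x : ℝ | (x, (0:ℝ)) ∈ GammaPlus {(a,0),(0,b)}} = Ici (a:ℝ) := by
      rw [gamma_two a b ha hb]
      ext z
      simp only [Set.mem_setOf_eq, Set.mem_Ici]
      constructor
      · rintro ⟨h1, -, h3⟩; nlinarith
      · intro h1; exact ⟨le_trans ha0.le h1, le_refl 0, by nlinarith⟩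
    rw [this, csInf_Ici]
  have hB : axisB {(a,0),(0,b)} = b := by
    unfold axisB
    have : {y : ℝ | ((0:ℝ), y) ∈ GammaPlus {(a,0),(0,b)}} = Ici (b:ℝ) := by
      rw [gamma_two a b ha hb]
      ext z
      simp only [Set.mem_setOf_eq, Set.mem_Ici]
      constructor
      · rintro ⟨-, h2, h3⟩; nlinarith
      · intro h1; exact ⟨le_refl 0, le_trans hb0.le h1, by nlinarith⟩
    rw [this, csInf_Ici]
  have hS : areaS {(a,0),(0,b)} = (a:ℝ)*(b:ℝ)/2 := by
    unfold areaS
    have hset : {v : ℝ × ℝ | 0 ≤ v.1 ∧ 0 ≤ v.2} \ GammaPlus {(a,0),(0,b)}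
        = {v : ℝ × ℝ | 0 ≤ v.1 ∧ 0 ≤ v.2 ∧ v.2 < ((a:ℝ)*b - b*v.1)/a} := by
      rw [gamma_two a b ha hb]
      ext ⟨x, y⟩
      simp only [Set.mem_diff, Set.mem_setOf_eq]
      constructor
      · rintro ⟨⟨hx, hy⟩, hn⟩
        refine ⟨hx, hy, ?_⟩
        rw [lt_div_iff₀ ha0]
        by_contra hc
        push_neg at hc
        exact hn ⟨hx, hy, by nlinarith⟩
      · rintro ⟨hx, hy, hlt⟩
        rw [lt_div_iff₀ ha0] at hlt
        exact ⟨⟨hx, hy⟩, fun hmem => by nlinarith [hmem.2.2]⟩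
    have hv := vol_under (fun x : ℝ => ((a:ℝ)*b - b*x)/a) (a:ℝ) ha0
      (by fun_prop)
      (fun x hx => by
        have h1 := hx.1; have h2 := hx.2
        apply div_nonneg _ ha0.le; nlinarith)
      (fun x hx => by
        apply div_nonpos_of_nonpos_of_nonneg _ ha0.le; nlinarith)
    rw [hset,
      show volume {v : ℝ × ℝ | 0 ≤ v.1 ∧ 0 ≤ v.2 ∧ v.2 < ((a:ℝ)*b - b*v.1)/a}
        = ENNReal.ofReal (∫ x in Ioo (0:ℝ) (a:ℝ), ((a:ℝ)*b - b*x)/a) from hv]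
    have hint : ∫ x in Ioo (0:ℝ) (a:ℝ), ((a:ℝ)*b - b*x)/a = (a:ℝ)*b/2 := by
      rw [← integral_Ioc_eq_integral_Ioo, ← intervalIntegral.integral_of_le ha0.le]
      rw [intervalIntegral.integral_congr
        (g := fun x : ℝ => (a:ℝ)*b/(a:ℝ) - ((b:ℝ)/a)*x) (fun x _ => by ring)]
      rw [intervalIntegral.integral_sub intervalIntegrable_const
        (by apply Continuous.intervalIntegrable; fun_prop)]
      rw [intervalIntegral.integral_const, intervalIntegral.integral_const_mul,
        integral_id]
      simp only [smul_eq_mul]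
      field_simp
      ring
    rw [hint, ENNReal.toReal_ofReal (by positivity)]
  unfold newtonNumber
  rw [hA, hB, hS]; ring

lemma newton_three (b d : ℕ) (hd : 1 ≤ d) (h : 3*d < b) :
    newtonNumber {(3,0),(2,d),(0,b)} = (b:ℝ) + 3*(d:ℝ) - 2 := by
  have hd0 : (0:ℝ) < d := by exact_mod_cast hd
  have hb3d : 3*(d:ℝ) < b := by exact_mod_cast h
  have hbd : (d:ℝ) < b := by linarith
  have hA : axisA {(3,0),(2,d),(0,b)} = 3 := by
    unfold axisA
    have : {x : ℝ | (x, (0:ℝ)) ∈ GammaPlus {(3,0),(2,d),(0,b)}} = Ici (3:ℝ) := by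
      rw [gamma_three b d hd h]
      ext z
      simp only [Set.mem_setOf_eq, Set.mem_Ici]
      constructor
      · rintro ⟨h1, -, h3, -⟩; nlinarith
      · intro h1
        refine ⟨by linarith, le_refl 0, by nlinarith, ?_⟩
        have : ((b:ℝ)-(d:ℝ))*3 ≤ ((b:ℝ)-(d:ℝ))*z :=
          mul_le_mul_of_nonneg_left h1 (by linarith)
        nlinarith
    rw [this, csInf_Ici]
  have hB : axisB {(3,0),(2,d),(0,b)} = b := by
    unfold axisB
    have : {y : ℝ | ((0:ℝ), y) ∈ GammaPlus {(3,0),(2,d),(0,b)}} = Ici (b:ℝ) := by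
      rw [gamma_three b d hd h]
      ext z
      simp only [Set.mem_setOf_eq, Set.mem_Ici]
      constructor
      · rintro ⟨-, -, -, h4⟩; nlinarith
      · intro h1; exact ⟨le_refl 0, by nlinarith, by nlinarith, by nlinarith⟩
    rw [this, csInf_Ici]
  have hS : areaS {(3,0),(2,d),(0,b)} = (b:ℝ) + 3*(d:ℝ)/2 := by
    unfold areaS
    set g : ℝ → ℝ := fun x => max (3*(d:ℝ) - (d:ℝ)*x) ((2*(b:ℝ) - ((b:ℝ)-(d:ℝ))*x)/2)
      with hg
    have hset : {v : ℝ × ℝ | 0 ≤ v.1 ∧ 0 ≤ v.2} \ GammaPlus {(3,0),(2,d),(0,b)}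
        = {v : ℝ × ℝ | 0 ≤ v.1 ∧ 0 ≤ v.2 ∧ v.2 < g v.1} := by
      rw [gamma_three b d hd h]
      ext ⟨x, y⟩
      simp only [Set.mem_diff, Set.mem_setOf_eq, hg, lt_max_iff]
      constructor
      · rintro ⟨⟨hx, hy⟩, hn⟩
        refine ⟨hx, hy, ?_⟩
        by_contra hc
        push_neg at hc
        obtain ⟨hc1, hc2⟩ := hc
        exact hn ⟨hx, hy, by linarith, by linarith⟩
      · rintro ⟨hx, hy, hlt⟩
        refine ⟨⟨hx, hy⟩, fun hmem => ?_⟩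
        obtain ⟨-, -, h3, h4⟩ := hmem
        rcases hlt with h5 | h5 <;> linarith
    have hv := vol_under g 3 (by norm_num)
      (Continuous.max (by fun_prop) (by fun_prop))
      (fun x hx => by
        refine le_trans ?_ (le_max_left _ _)
        have h1 := hx.1; have h2 := hx.2
        nlinarith)
      (fun x hx => by
        apply max_le
        · nlinarith
        · have : ((b:ℝ)-(d:ℝ))*3 ≤ ((b:ℝ)-(d:ℝ))*x :=
            mul_le_mul_of_nonneg_left hx (by linarith)
          nlinarith)
    rw [hset, hv]
    have hI1 : IntervalIntegrable g volume 0 2 :=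
      (Continuous.max (by fun_prop) (by fun_prop)).intervalIntegrable _ _
    have hI2 : IntervalIntegrable g volume 2 3 :=
      (Continuous.max (by fun_prop) (by fun_prop)).intervalIntegrable _ _
    have hint : ∫ x in Ioo (0:ℝ) 3, g x = (b:ℝ) + 3*(d:ℝ)/2 := by
      rw [← integral_Ioc_eq_integral_Ioo,
        ← intervalIntegral.integral_of_le (by norm_num : (0:ℝ) ≤ 3),
        ← intervalIntegral.integral_add_adjacent_intervals hI1 hI2]
      have e1 : ∫ x in (0:ℝ)..2, g x = (b:ℝ) + (d:ℝ) := by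
        rw [intervalIntegral.integral_congr
          (g := fun x : ℝ => (b:ℝ) - (((b:ℝ)-(d:ℝ))/2)*x) ?_]
        · rw [intervalIntegral.integral_sub intervalIntegrable_const
            (by apply Continuous.intervalIntegrable; fun_prop)]
          rw [intervalIntegral.integral_const, intervalIntegral.integral_const_mul,
            integral_id]
          simp only [smul_eq_mul]
          ring
        · intro x hx
          rw [Set.uIcc_of_le (by norm_num : (0:ℝ) ≤ 2)] at hx
          have h1 := hx.1; have h2 := hx.2
          rw [hg]
          dsimp only
          have : 3*(d:ℝ) - (d:ℝ)*x ≤ (2*(b:ℝ) - ((b:ℝ)-(d:ℝ))*x)/2 := by nlinarith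
          rw [max_eq_right this]
          ring
      have e2 : ∫ x in (2:ℝ)..3, g x = (d:ℝ)/2 := by
        rw [intervalIntegral.integral_congr
          (g := fun x : ℝ => 3*(d:ℝ) - (d:ℝ)*x) ?_]
        · rw [intervalIntegral.integral_sub intervalIntegrable_const
            (by apply Continuous.intervalIntegrable; fun_prop)]
          rw [intervalIntegral.integral_const, intervalIntegral.integral_const_mul,
            integral_id]
          simp only [smul_eq_mul]
          ring
        · intro x hx
          rw [Set.uIcc_of_le (by norm_num : (2:ℝ) ≤ 3)] at hx
          have h1 := hx.1; have h2 := hx.2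
          rw [hg]
          dsimp only
          have : (2*(b:ℝ) - ((b:ℝ)-(d:ℝ))*x)/2 ≤ 3*(d:ℝ) - (d:ℝ)*x := by nlinarith
          rw [max_eq_left this]
      rw [e1, e2]; ring
    rw [hint, ENNReal.toReal_ofReal (by positivity)]
  unfold newtonNumber
  rw [hA, hB, hS]; ring

lemma gammaPlus_eq_of (P F : Finset (ℕ×ℕ)) (hPF : P ⊆ F)
    (h : ∀ v ∈ F, ((v.1:ℝ),(v.2:ℝ)) ∈ GammaPlus P) :
    GammaPlus F = GammaPlus P := by
  have hQ : Convex ℝ {v : ℝ×ℝ | 0 ≤ v.1 ∧ 0 ≤ v.2} := by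
    intro p hp q hq s t hs ht hst
    have e1 : (s • p + t • q).1 = s * p.1 + t * q.1 := rfl
    have e2 : (s • p + t • q).2 = s * p.2 + t * q.2 := rfl
    exact ⟨by rw [e1]; exact add_nonneg (mul_nonneg hs hp.1) (mul_nonneg ht hq.1),
      by rw [e2]; exact add_nonneg (mul_nonneg hs hp.2) (mul_nonneg ht hq.2)⟩
  have hconv : Convex ℝ (GammaPlus P) :=
    Convex.add (convex_convexHull _ _) hQ
  apply subset_antisymm
  · have h1 : convexHull ℝ ((fun v : ℕ × ℕ => ((v.1 : ℝ), (v.2 : ℝ))) '' (F : Set (ℕ × ℕ)))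
        ⊆ GammaPlus P :=
      convexHull_min (by rintro _ ⟨v, hv, rfl⟩; exact h v hv) hconv
    intro z hz
    obtain ⟨p, hp, q, hq, rfl⟩ := hz
    obtain ⟨p', hp', q', hq', rfl⟩ := h1 hp
    refine ⟨p', hp', q' + q, ⟨?_, ?_⟩, (add_assoc _ _ _).symm⟩
    · show 0 ≤ q'.1 + q.1; exact add_nonneg hq'.1 hq.1
    · show 0 ≤ q'.2 + q.2; exact add_nonneg hq'.2 hq.2
  · apply Set.add_subset_add_right
    apply convexHull_mono
    exact Set.image_mono (by exact_mod_cast hPF)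

lemma newtonNumber_congr {F P : Finset (ℕ×ℕ)} (h : GammaPlus F = GammaPlus P) :
    newtonNumber F = newtonNumber P := by
  unfold newtonNumber areaS axisA axisB
  rw [h]


/-- for `k ≥ 2` every `n` with `1 ≤ n ≤ 6k - 2`, `n ≠ 6k - 3`, is
attainable from `tr(3, 3k)`. -/
theorem stmt_7 (k : ℕ) (hk : 2 ≤ k) (n : ℤ) (hn1 : 1 ≤ n) (hn2 : n ≤ 6 * (k : ℤ) - 2)
    (hne : n ≠ 6 * (k : ℤ) - 3) :
    Attainable {(3, 0), (0, 3 * k)} n := by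
  rcases le_or_gt n (3 * (k:ℤ) - 1) with hcase | hcase
  · -- P = {(2,0),(0,b)}, b = n+1
    obtain ⟨b, hb1, hbk, hnb⟩ : ∃ b : ℕ, 1 ≤ b ∧ b ≤ 3 * k ∧ (n:ℤ) = (b:ℤ) - 1 :=
      ⟨n.toNat + 1, by omega, by omega, by omega⟩
    refine ⟨{(2,0),(0,b)}, ?_⟩
    have hG : GammaPlus ({(3,0),(0,3*k)} ∪ {(2,0),(0,b)}) = GammaPlus {(2,0),(0,b)} := by
      apply gammaPlus_eq_of _ _ (by intro v hv; simp at hv ⊢; tauto)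
      intro v hv
      rw [gamma_two 2 b (by norm_num) hb1]
      have hb0 : (0:ℝ) ≤ b := Nat.cast_nonneg b
      have hbk' : (b:ℝ) ≤ 3 * k := by exact_mod_cast hbk
      simp only [Finset.mem_union, Finset.mem_insert, Finset.mem_singleton] at hv
      rcases hv with ((rfl | rfl) | (rfl | rfl)) <;>
        refine ⟨by positivity, by positivity, ?_⟩ <;> push_cast <;> nlinarith
    rw [newtonNumber_congr hG, newton_two 2 b (by norm_num) hb1]
    have : (n:ℝ) = (b:ℝ) - 1 := by exact_mod_cast hnb
    rw [this]; push_cast; ring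
  · rcases Int.even_or_odd n with heven | hodd
    · -- P = {(3,0),(0,b)}, n = 2(b-1)
      obtain ⟨m, hm⟩ := heven
      obtain ⟨b, hb1, hbk, hnb⟩ : ∃ b : ℕ, 1 ≤ b ∧ b ≤ 3 * k ∧ (n:ℤ) = 2*((b:ℤ) - 1) :=
        ⟨m.toNat + 1, by omega, by omega, by omega⟩
      refine ⟨{(3,0),(0,b)}, ?_⟩
      have hG : GammaPlus ({(3,0),(0,3*k)} ∪ {(3,0),(0,b)}) = GammaPlus {(3,0),(0,b)} := by
        apply gammaPlus_eq_of _ _ (by intro v hv; simp at hv ⊢; tauto)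
        intro v hv
        rw [gamma_two 3 b (by norm_num) hb1]
        have hb0 : (0:ℝ) ≤ b := Nat.cast_nonneg b
        have hbk' : (b:ℝ) ≤ 3 * k := by exact_mod_cast hbk
        simp only [Finset.mem_union, Finset.mem_insert, Finset.mem_singleton] at hv
        rcases hv with ((rfl | rfl) | (rfl | rfl)) <;>
          refine ⟨by positivity, by positivity, ?_⟩ <;> push_cast <;> nlinarith
      rw [newtonNumber_congr hG, newton_two 3 b (by norm_num) hb1]
      have : (n:ℝ) = 2*((b:ℝ) - 1) := by exact_mod_cast hnb
      rw [this]; push_cast; ring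
    · -- P = {(2,d),(0,b)}
      obtain ⟨m, hm⟩ := hodd
      obtain ⟨d, b, hd1, h3db, hbk, hnb⟩ :
          ∃ d b : ℕ, 1 ≤ d ∧ 3*d < b ∧ b ≤ 3 * k ∧ (n:ℤ) = (b:ℤ) + 3*(d:ℤ) - 2 := by
        have hr : (n + 2 - 3*(k:ℤ)) % 3 = 0 ∨ (n + 2 - 3*(k:ℤ)) % 3 = 1 ∨
            (n + 2 - 3*(k:ℤ)) % 3 = 2 := by omega
        rcases hr with hr | hr | hr
        · exact ⟨((n + 2 - 3*(k:ℤ))/3).toNat, 3*k, by omega, by omega, by omega, by omega⟩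
        · exact ⟨((n + 4 - 3*(k:ℤ))/3).toNat, (n + 2 - 3*((n + 4 - 3*(k:ℤ))/3)).toNat,
            by omega, by omega, by omega, by omega⟩
        · exact ⟨((n + 3 - 3*(k:ℤ))/3).toNat, (n + 2 - 3*((n + 3 - 3*(k:ℤ))/3)).toNat,
            by omega, by omega, by omega, by omega⟩
      refine ⟨{(2,d),(0,b)}, ?_⟩
      have hG : GammaPlus ({(3,0),(0,3*k)} ∪ {(2,d),(0,b)}) = GammaPlus {(3,0),(2,d),(0,b)} := by
        apply gammaPlus_eq_of _ _ (by intro v hv; simp at hv ⊢; tauto)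
        intro v hv
        rw [gamma_three b d hd1 h3db]
        have hd0 : (0:ℝ) ≤ d := Nat.cast_nonneg d
        have hbk' : (b:ℝ) ≤ 3 * k := by exact_mod_cast hbk
        have h3db' : 3*(d:ℝ) < b := by exact_mod_cast h3db
        simp only [Finset.mem_union, Finset.mem_insert, Finset.mem_singleton] at hv
        rcases hv with ((rfl | rfl) | (rfl | rfl)) <;>
          refine ⟨by positivity, by positivity, ?_, ?_⟩ <;> push_cast <;> nlinarith
      rw [newtonNumber_congr hG, newton_three b d hd1 h3db]
      have : (n:ℝ) = (b:ℝ) + 3*(d:ℝ) - 2 := by exact_mod_cast hnb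
      rw [this]
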